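/- arXiv:1701.08219 — 2 statements merged into one kernel-verified Lean document; each statement's English description precedes it below -/
import Mathlib

section
/- Jacobi–Maupertuis principle (forward direction, Euclidean coordinates): let V : ℝⁿ → ℝ be twice continuously differentiable, let γ : ℝ → ℝⁿ satisfy Newton's equation γ''(t) = −∇V(γ(t)), and let E = (1/2)‖γ'(0)‖² + V(γ(0)). Assume V(γ(t)) < E and γ'(t) ≠ 0 for all t. Define the conformal factor f(p) = 2(E − V(p)) and reparametrize γ by the new parameter s with ds/dt = f(γ(t)); i.e., let σ(s) = γ(t(s)) where t(s) is the inverse of s(t) = ∫₀ᵗ f(γ(τ)) dτ. Then σ satisfies the geodesic equation of the Riemannian metric G = f·⟨·,·⟩ on the region {V < E}: σ''(s) + (1/f(σ))⟨∇f(σ), σ'(s)⟩·σ'(s) − (1/(2 f(σ)))·‖σ'(s)‖²·∇f(σ) = 0 for all s, where ∇f = −2∇V. In particular, the trajectories in configuration space of the natural system with potential V and energy E coincide, up to reparametrization, with geodesics of the Jacobi metric G = 2(E − V)·⟨·,·⟩. -/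
open InnerProductSpace


/-- Jacobi–Maupertuis principle (forward direction, Euclidean coordinates):
let `V` be C², let `γ` solve Newton's equation `γ'' = −∇V(γ)` with energy
`E = (1/2)‖γ'(0)‖² + V(γ(0))`, and assume `V(γ(t)) < E` and `γ'(t) ≠ 0` for
all `t`.  Set `f(p) = 2(E − V(p))` and reparametrize `γ` by the arc parameter
`s(t) = ∫₀ᵗ f(γ(τ)) dτ`, with inverse `t(s)` (`timeOf`), so `σ(s) = γ(t(s))`.
Then `σ` is twice differentiable and satisfies the geodesic equation of the
conformal (Jacobi) metric `G = f⟨·,·⟩`: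
`σ'' + (1/f)⟨∇f, σ'⟩σ' − (1/(2f))‖σ'‖²∇f = 0`. -/
theorem jacobi_maupertuis_forward
    (n : ℕ) (V : EuclideanSpace ℝ (Fin n) → ℝ)
    (hV : ContDiff ℝ 2 V)
    (γ γ' γ'' : ℝ → EuclideanSpace ℝ (Fin n))
    (hγ : ∀ t, HasDerivAt γ (γ' t) t)
    (hγ' : ∀ t, HasDerivAt γ' (γ'' t) t)
    (hNewton : ∀ t, γ'' t = - gradient V (γ t))
    (E : ℝ) (hE : E = (1 / 2) * ‖γ' 0‖ ^ 2 + V (γ 0))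
    (hbound : ∀ t, V (γ t) < E)
    (hne : ∀ t, γ' t ≠ 0)
    (f : EuclideanSpace ℝ (Fin n) → ℝ) (hf : f = fun p => 2 * (E - V p))
    (sOf : ℝ → ℝ) (hsOf : sOf = fun t => ∫ τ in (0:ℝ)..t, f (γ τ))
    (timeOf : ℝ → ℝ)
    (hinv₁ : ∀ t, timeOf (sOf t) = t)
    (hinv₂ : ∀ s, sOf (timeOf s) = s)
    (σ : ℝ → EuclideanSpace ℝ (Fin n)) (hσ : σ = fun s => γ (timeOf s)) :
    ∃ σ' σ'' : ℝ → EuclideanSpace ℝ (Fin n),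
      (∀ s, HasDerivAt σ (σ' s) s) ∧
      (∀ s, HasDerivAt σ' (σ'' s) s) ∧
      (∀ s, σ'' s
        + ((inner ℝ (gradient f (σ s)) (σ' s) : ℝ) / f (σ s)) • σ' s
        - (‖σ' s‖ ^ 2 / (2 * f (σ s))) • gradient f (σ s) = 0) := by
  have hVd : Differentiable ℝ V := hV.differentiable (by norm_num)
  -- derivative of V ∘ γ
  have hVγ : ∀ t, HasDerivAt (fun t => V (γ t))
      ((inner ℝ (gradient V (γ t)) (γ' t) : ℝ)) t := by
    intro t
    have hD : HasFDerivAt V (toDual ℝ _ (gradient V (γ t))) (γ t) :=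
      (hVd (γ t)).hasGradientAt.hasFDerivAt
    exact hD.comp_hasDerivAt t (hγ t)
  set g : ℝ → ℝ := fun t => 2 * (E - V (γ t)) with hg_def
  have hgpos : ∀ t, 0 < g t := fun t => by
    have := hbound t; simp only [hg_def]; linarith
  -- energy conservation
  have hEnergy : ∀ t, ‖γ' t‖ ^ 2 = g t := by
    have hW : ∀ t, HasDerivAt (fun t => (inner ℝ (γ' t) (γ' t) : ℝ) + 2 * V (γ t)) 0 t := by
      intro t
      have h1 : HasDerivAt (fun t => (inner ℝ (γ' t) (γ' t) : ℝ))
          ((inner ℝ (γ' t) (γ'' t) : ℝ) + (inner ℝ (γ'' t) (γ' t) : ℝ)) t :=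
        (hγ' t).inner ℝ (hγ' t)
      have h2 := ((hVγ t).const_mul (2:ℝ))
      have := h1.add h2
      refine this.congr_deriv ?_
      rw [hNewton t, inner_neg_right, inner_neg_left,
        real_inner_comm (γ' t) (gradient V (γ t))]
      ring
    have hconst : ∀ t, (inner ℝ (γ' t) (γ' t) : ℝ) + 2 * V (γ t)
        = (inner ℝ (γ' 0) (γ' 0) : ℝ) + 2 * V (γ 0) := by
      intro t
      exact is_const_of_deriv_eq_zero (fun x => (hW x).differentiableAt)
        (fun x => (hW x).deriv) t 0
    intro t
    have ht := hconst t
    have h0 : (inner ℝ (γ' 0) (γ' 0) : ℝ) = ‖γ' 0‖ ^ 2 := real_inner_self_eq_norm_sq _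
    have htt : (inner ℝ (γ' t) (γ' t) : ℝ) = ‖γ' t‖ ^ 2 := real_inner_self_eq_norm_sq _
    rw [htt, h0] at ht
    simp only [hg_def]
    have := hE
    nlinarith [ht]
  -- derivative of g
  set gd : ℝ → ℝ := fun t => (-2) * (inner ℝ (gradient V (γ t)) (γ' t) : ℝ) with hgd_def
  have hg : ∀ t, HasDerivAt g (gd t) t := by
    intro t
    have := ((hVγ t).const_sub E).const_mul (2:ℝ)
    refine this.congr_deriv ?_
    simp [hgd_def]
  have hgcont : Continuous g := by
    rw [continuous_iff_continuousAt]; exact fun t => (hg t).continuousAt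
  -- sOf has strict derivative g
  have hsOf' : ∀ t, HasStrictDerivAt sOf (g t) t := by
    intro t
    rw [hsOf, hf]
    exact intervalIntegral.integral_hasStrictDerivAt_right
      ((hgcont.intervalIntegrable _ _))
      (hgcont.stronglyMeasurableAtFilter _ _) hgcont.continuousAt
  have hsm : StrictMono sOf :=
    strictMono_of_deriv_pos fun x => by
      rw [(hsOf' x).hasDerivAt.deriv]; exact hgpos x
  have htmono : Monotone timeOf := by
    intro a b hab
    rw [← hsm.le_iff_le, hinv₂, hinv₂]
    exact hab
  have htsurj : Function.Surjective timeOf := fun t => ⟨sOf t, hinv₁ t⟩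
  have htcont : Continuous timeOf := htmono.continuous_of_surjective htsurj
  -- derivative of timeOf
  have htime : ∀ s, HasDerivAt timeOf (g (timeOf s))⁻¹ s := fun s =>
    HasDerivAt.of_local_left_inverse htcont.continuousAt
      (hsOf' (timeOf s)).hasDerivAt (ne_of_gt (hgpos _))
      (Filter.Eventually.of_forall hinv₂)
  -- first derivative of σ
  set A : ℝ → EuclideanSpace ℝ (Fin n) := fun t => (g t)⁻¹ • γ' t with hA_def
  set A' : ℝ → EuclideanSpace ℝ (Fin n) :=
    fun t => (g t)⁻¹ • γ'' t + (-(gd t) / (g t) ^ 2) • γ' t with hA'_def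
  have hA : ∀ t, HasDerivAt A (A' t) t := fun t =>
    ((hg t).inv (ne_of_gt (hgpos t))).smul (hγ' t)
  refine ⟨fun s => A (timeOf s), fun s => (g (timeOf s))⁻¹ • A' (timeOf s), ?_, ?_, ?_⟩
  · intro s
    rw [hσ]
    exact HasDerivAt.scomp s (hγ (timeOf s)) (htime s)
  · intro s
    exact HasDerivAt.scomp s (hA (timeOf s)) (htime s)
  · intro s
    set t := timeOf s with ht_def
    have hgne : g t ≠ 0 := ne_of_gt (hgpos t)
    have hσs : σ s = γ t := by rw [hσ]
    have hfσ : f (σ s) = g t := by rw [hσs, hf]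
    have hgradf : gradient f (σ s) = (-2 : ℝ) • gradient V (γ t) := by
      rw [hσs]
      have hD : HasFDerivAt V (toDual ℝ _ (gradient V (γ t))) (γ t) :=
        (hVd (γ t)).hasGradientAt.hasFDerivAt
      have h2 : HasFDerivAt f ((2:ℝ) • (-(toDual ℝ _ (gradient V (γ t))))) (γ t) := by
        rw [hf]; exact (hD.const_sub E).const_mul 2
      rw [h2.hasGradientAt.gradient]
      simp [map_smul]
      rfl
    have hnorm : ‖(g t)⁻¹ • γ' t‖ ^ 2 = (g t)⁻¹ := by
      rw [norm_smul, mul_pow, Real.norm_eq_abs, abs_of_pos (inv_pos.mpr (hgpos t)),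
        hEnergy t, sq, mul_assoc, inv_mul_cancel₀ hgne, mul_one]
    beta_reduce
    simp only [hA_def, hA'_def]
    rw [hgradf, hfσ, hNewton t, real_inner_smul_left, real_inner_smul_right, hnorm]
    simp only [hgd_def]
    match_scalars
    · simp only [← ht_def]
      field_simp
      ring
    · field_simp
      ring
end

section
/- Jacobi–Maupertuis principle (converse direction, Euclidean coordinates): let V : ℝⁿ → ℝ be twice continuously differentiable, fix E ∈ ℝ, set f(p) = 2(E − V(p)), and let σ : ℝ → ℝⁿ be a twice differentiable curve contained in the region {V < E} satisfying the geodesic equation of the conformal metric G = f·⟨·,·⟩, namely σ''(s) + (1/f(σ))⟨∇f(σ), σ'(s)⟩·σ'(s) − (1/(2 f(σ)))·‖σ'(s)‖²·∇f(σ) = 0, with G-unit speed normalization f(σ(s))·‖σ'(s)‖² = 1 for all s (which is preserved along geodesics once it holds at s = 0). Reparametrize σ by the time parameter t with dt/ds = 1/f(σ(s)); i.e., let γ(t) = σ(s(t)) where s(t) is the inverse of t(s) = ∫₀ˢ (1/f(σ(u))) du. Then γ satisfies Newton's equation γ''(t) = −∇V(γ(t)) for all t, and its energy (1/2)‖γ'(t)‖²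 + V(γ(t)) equals E identically. -/
open InnerProductSpace in
/-- Jacobi–Maupertuis principle (converse direction, Euclidean coordinates):
let `V` be C², fix `E`, set `f(p) = 2(E − V(p))`, and let `σ` be a twice
differentiable curve contained in `{V < E}` satisfying the geodesic equation
of the conformal metric `G = f⟨·,·⟩`,
`σ'' + (1/f)⟨∇f, σ'⟩σ' − (1/(2f))‖σ'‖²∇f = 0`, with G-unit speed
`f(σ(s))‖σ'(s)‖² = 1`.  Reparametrize by `t(s) = ∫₀ˢ (1/f(σ(u))) du` with
inverse `s(t)` (`sFun`), and set `γ(t) = σ(s(t))`.  Then `γ` is twice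
differentiable, satisfies Newton's equation `γ'' = −∇V(γ)`, and has energy
`(1/2)‖γ'‖² + V(γ) = E` identically. -/
theorem jacobi_maupertuis_converse
    (n : ℕ) (V : EuclideanSpace ℝ (Fin n) → ℝ)
    (hV : ContDiff ℝ 2 V) (E : ℝ)
    (f : EuclideanSpace ℝ (Fin n) → ℝ) (hf : f = fun p => 2 * (E - V p))
    (σ σ' σ'' : ℝ → EuclideanSpace ℝ (Fin n))
    (hσ : ∀ s, HasDerivAt σ (σ' s) s)
    (hσ' : ∀ s, HasDerivAt σ' (σ'' s) s)
    (hregion : ∀ s, V (σ s) < E)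
    (hgeo : ∀ s, σ'' s
      + ((inner ℝ (gradient f (σ s)) (σ' s) : ℝ) / f (σ s)) • σ' s
      - (‖σ' s‖ ^ 2 / (2 * f (σ s))) • gradient f (σ s) = 0)
    (hunit : ∀ s, f (σ s) * ‖σ' s‖ ^ 2 = 1)
    (tOf : ℝ → ℝ) (htOf : tOf = fun s => ∫ u in (0:ℝ)..s, 1 / f (σ u))
    (sFun : ℝ → ℝ)
    (hinv₁ : ∀ s, sFun (tOf s) = s)
    (hinv₂ : ∀ t, tOf (sFun t) = t)
    (γ : ℝ → EuclideanSpace ℝ (Fin n)) (hγdef : γ = fun t => σ (sFun t)) :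
    ∃ γ' γ'' : ℝ → EuclideanSpace ℝ (Fin n),
      (∀ t, HasDerivAt γ (γ' t) t) ∧
      (∀ t, HasDerivAt γ' (γ'' t) t) ∧
      (∀ t, γ'' t = - gradient V (γ t)) ∧
      (∀ t, (1 / 2) * ‖γ' t‖ ^ 2 + V (γ t) = E) := by
  have hVd : Differentiable ℝ V := hV.differentiable (by norm_num)
  -- positivity of f along σ
  have hfpos : ∀ s, 0 < f (σ s) := by
    intro s; rw [hf]; have := hregion s; dsimp only; linarith
  -- differentiability of f and gradient formula
  have hfdiff : Differentiable ℝ f := by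
    rw [hf]; exact (differentiable_const E |>.sub hVd).const_mul 2
  have hgradf : ∀ p, gradient f p = (-2 : ℝ) • gradient V p := by
    intro p
    have h1 : HasFDerivAt f ((-2 : ℝ) • fderiv ℝ V p) p := by
      have h2 : HasFDerivAt (fun q => 2 * (E - V q))
          ((2:ℝ) • ((0 : EuclideanSpace ℝ (Fin n) →L[ℝ] ℝ) - fderiv ℝ V p)) p :=
        (((hasFDerivAt_const E p).sub (hVd p).hasFDerivAt).const_mul (2:ℝ))
      rw [hf]
      convert h2 using 1
      module
    unfold gradient
    rw [h1.fderiv, map_smul]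
  -- inner product formula for the derivative of f along a curve
  have hfchain : ∀ s, HasDerivAt (fun u => f (σ u))
      ((inner ℝ (gradient f (σ s)) (σ' s) : ℝ)) s := by
    intro s
    have h1 : HasFDerivAt f (toDual ℝ _ (gradient f (σ s))) (σ s) :=
      ((hfdiff (σ s)).hasGradientAt).hasFDerivAt
    have := h1.comp_hasDerivAt s (hσ s)
    simpa [Function.comp_def, toDual_apply_apply] using this
  -- continuity of σ and of 1/f∘σ
  have hσc : Continuous σ := by
    rw [continuous_iff_continuousAt]; exact fun s => (hσ s).continuousAt
  have hcont : Continuous (fun u => 1 / f (σ u)) := by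
    apply Continuous.div continuous_const (hfdiff.continuous.comp hσc)
    exact fun u => (hfpos u).ne'
  -- derivative of tOf
  have htd : ∀ s, HasDerivAt tOf (1 / f (σ s)) s := by
    intro s
    rw [htOf]
    exact intervalIntegral.integral_hasDerivAt_right
      (hcont.intervalIntegrable 0 s)
      (hcont.stronglyMeasurableAtFilter _ _)
      hcont.continuousAt
  -- tOf strictly monotone and surjective
  have hmono : StrictMono tOf :=
    strictMono_of_deriv_pos (fun s => by
      rw [(htd s).deriv]; exact div_pos one_pos (hfpos s))
  have hsurj : Function.Surjective tOf := fun t => ⟨sFun t, hinv₂ t⟩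
  -- sFun is continuous
  have hsc : Continuous sFun := by
    have hse : sFun = ⇑(StrictMono.orderIsoOfSurjective tOf hmono hsurj).symm := by
      funext t
      apply hmono.injective
      rw [hinv₂]
      exact ((StrictMono.orderIsoOfSurjective tOf hmono hsurj).apply_symm_apply t).symm
    rw [hse]
    exact OrderIso.continuous _
  -- derivative of sFun
  have hsd : ∀ t, HasDerivAt sFun (f (σ (sFun t))) t := by
    intro t
    have h := HasDerivAt.of_local_left_inverse (hsc.continuousAt)
      (htd (sFun t)) ((div_pos one_pos (hfpos (sFun t))).ne')
      (Filter.Eventually.of_forall hinv₂)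
    simpa [one_div] using h
  -- first derivative of γ
  set γ₁ : ℝ → EuclideanSpace ℝ (Fin n) :=
    fun t => f (σ (sFun t)) • σ' (sFun t) with hγ₁
  have hγd : ∀ t, HasDerivAt γ (γ₁ t) t := by
    intro t
    have := (hσ (sFun t)).scomp t (hsd t)
    rw [hγdef]
    simpa [Function.comp_def, hγ₁] using this
  -- derivative of h(s) = f(σ s) • σ' s
  set h : ℝ → EuclideanSpace ℝ (Fin n) := fun s => f (σ s) • σ' s with hh
  have hhd : ∀ s, HasDerivAt h
      (f (σ s) • σ'' s + (inner ℝ (gradient f (σ s)) (σ' s) : ℝ) • σ' s) s :=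
    fun s => (hfchain s).smul (hσ' s)
  -- second derivative of γ
  set γ₂ : ℝ → EuclideanSpace ℝ (Fin n) :=
    fun t => f (σ (sFun t)) • (f (σ (sFun t)) • σ'' (sFun t)
      + (inner ℝ (gradient f (σ (sFun t))) (σ' (sFun t)) : ℝ) • σ' (sFun t)) with hγ₂
  have hγd' : ∀ t, HasDerivAt γ₁ (γ₂ t) t := by
    intro t
    exact (hhd (sFun t)).scomp t (hsd t)
  -- Newton's equation
  have hnewton : ∀ s, f (σ s) • (f (σ s) • σ'' s
      + (inner ℝ (gradient f (σ s)) (σ' s) : ℝ) • σ' s) = - gradient V (σ s) := by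
    intro s
    have hF := hfpos s
    have hFne : f (σ s) ≠ 0 := hF.ne'
    have hg := hgeo s
    have hσ''eq : σ'' s = (‖σ' s‖ ^ 2 / (2 * f (σ s))) • gradient f (σ s)
        - ((inner ℝ (gradient f (σ s)) (σ' s) : ℝ) / f (σ s)) • σ' s :=
      eq_sub_of_add_eq (sub_eq_zero.mp hg)
    rw [hσ''eq, hgradf]
    have hu := hunit s
    match_scalars
    all_goals field_simp
    · linear_combination (-1 : ℝ) * hu
    · ring
  -- Energy
  have henergy : ∀ s, (1 / 2) * ‖f (σ s) • σ' s‖ ^ 2 + V (σ s) = E := by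
    intro s
    have hu := hunit s
    have hF := hfpos s
    rw [norm_smul, Real.norm_eq_abs, abs_of_pos hF, mul_pow]
    have hfσ : f (σ s) = 2 * (E - V (σ s)) := by rw [hf]
    linear_combination (f (σ s) / 2) * hu + (1 / 2) * hfσ
  refine ⟨γ₁, γ₂, hγd, hγd', ?_, ?_⟩
  · intro t
    rw [hγdef]
    exact hnewton (sFun t)
  · intro t
    rw [hγdef]
    exact henergy (sFun t)
end
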